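/- Let Z ≥ 0, let A be Hermitian with largest eigenvalue p and smallest eigenvalue q, and B Hermitian with largest eigenvalue r and smallest eigenvalue s. Then |Tr(Z²AB) − Tr(ZAZB)| ≤ (1/4)(p−q)(r−s)·Tr(Z²). -/

import Mathlib

open Matrix ComplexOrder
variable {n : ℕ}

lemma tr_dMN (μ : Fin n → ℂ) (M N : Matrix (Fin n) (Fin n) ℂ) :
    trace (diagonal μ * (M * N)) = ∑ i, ∑ j, μ i * (M i j * N j i) := by
  simp [trace, diag, mul_apply, Finset.mul_sum, diagonal]

lemma tr_dMdN (μ ν : Fin n → ℂ) (M N : Matrix (Fin n) (Fin n) ℂ) :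
    trace (diagonal μ * (M * (diagonal ν * N))) = ∑ i, ∑ j, μ i * ν j * (M i j * N j i) := by
  simp [trace, diag, mul_apply, Finset.mul_sum, diagonal]
  congr 1; ext i; congr 1; ext j; ring

lemma trA (U : Matrix (Fin n) (Fin n) ℂ) (hUU : star U * U = 1) (hUU' : U * star U = 1)
    (l : Fin n → ℝ) (A B : Matrix (Fin n) (Fin n) ℂ) :
    trace ((U * diagonal (fun i => (l i : ℂ)) * star U) * (U * diagonal (fun i => (l i : ℂ)) * star U) * A * B)
      = ∑ i, ∑ j, ((l i : ℂ) * l i) * ((star U * A * U) i j * ((star U * B * U) j i)) := by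
  have cancel1 : ∀ X : Matrix (Fin n) (Fin n) ℂ, star U * (U * X) = X := fun X => by
    rw [← Matrix.mul_assoc, hUU, Matrix.one_mul]
  have cancel2 : ∀ X : Matrix (Fin n) (Fin n) ℂ, U * (star U * X) = X := fun X => by
    rw [← Matrix.mul_assoc, hUU', Matrix.one_mul]
  have key : (U * diagonal (fun i => (l i : ℂ)) * star U) * (U * diagonal (fun i => (l i : ℂ)) * star U) * A * B
      = U * (diagonal (fun i => (l i : ℂ)) * (diagonal (fun i => (l i : ℂ)) * ((star U * A * U) * ((star U * B * U) * star U)))) := by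
    simp only [Matrix.mul_assoc, cancel1, cancel2, hUU, hUU', Matrix.mul_one]
  rw [key, trace_mul_comm]
  generalize star U * A * U = M
  generalize star U * B * U = N
  simp only [Matrix.mul_assoc, hUU, Matrix.mul_one]
  rw [← Matrix.mul_assoc (diagonal _) (diagonal _), diagonal_mul_diagonal, tr_dMN]

lemma trB (U : Matrix (Fin n) (Fin n) ℂ) (hUU : star U * U = 1) (hUU' : U * star U = 1)
    (l : Fin n → ℝ) (A B : Matrix (Fin n) (Fin n) ℂ) :
    trace ((U * diagonal (fun i => (l i : ℂ)) * star U) * A * (U * diagonal (fun i => (l i : ℂ)) * star U) * B)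
      = ∑ i, ∑ j, ((l i : ℂ) * l j) * ((star U * A * U) i j * ((star U * B * U) j i)) := by
  have cancel1 : ∀ X : Matrix (Fin n) (Fin n) ℂ, star U * (U * X) = X := fun X => by
    rw [← Matrix.mul_assoc, hUU, Matrix.one_mul]
  have cancel2 : ∀ X : Matrix (Fin n) (Fin n) ℂ, U * (star U * X) = X := fun X => by
    rw [← Matrix.mul_assoc, hUU', Matrix.one_mul]
  have key : (U * diagonal (fun i => (l i : ℂ)) * star U) * A * (U * diagonal (fun i => (l i : ℂ)) * star U) * B
      = U * (diagonal (fun i => (l i : ℂ)) * ((star U * A * U) * (diagonal (fun i => (l i : ℂ)) * ((star U * B * U) * star U)))) := by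
    simp only [Matrix.mul_assoc, cancel1, cancel2, hUU, hUU', Matrix.mul_one]
  rw [key, trace_mul_comm]
  generalize star U * A * U = M
  generalize star U * B * U = N
  simp only [Matrix.mul_assoc, hUU, Matrix.mul_one]
  rw [tr_dMdN]

lemma trZZre (U : Matrix (Fin n) (Fin n) ℂ) (hUU : star U * U = 1) (hUU' : U * star U = 1)
    (l : Fin n → ℝ) :
    (trace ((U * diagonal (fun i => (l i : ℂ)) * star U) * (U * diagonal (fun i => (l i : ℂ)) * star U))).re
      = ∑ i, l i ^ 2 := by
  have cancel1 : ∀ X : Matrix (Fin n) (Fin n) ℂ, star U * (U * X) = X := fun X => by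
    rw [← Matrix.mul_assoc, hUU, Matrix.one_mul]
  have key : (U * diagonal (fun i => (l i : ℂ)) * star U) * (U * diagonal (fun i => (l i : ℂ)) * star U)
      = U * (diagonal (fun i => (l i : ℂ)) * (diagonal (fun i => (l i : ℂ)) * star U)) := by
    simp only [Matrix.mul_assoc, cancel1]
  rw [key, trace_mul_comm]
  simp only [Matrix.mul_assoc, hUU, Matrix.mul_one]
  rw [diagonal_mul_diagonal, trace_diagonal]
  simp [pow_two]

lemma row_bound (U A : Matrix (Fin n) (Fin n) ℂ) (hUU : star U * U = 1) (hUU' : U * star U = 1)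
    (hA : A.IsHermitian) (α c : ℝ) (hc : ∀ k, |hA.eigenvalues k - α| ≤ c) (i : Fin n) :
    ∑ j, (‖(star U * A * U - (α : ℂ) • 1) i j‖) ^ 2 ≤ c ^ 2 := by
  set V : Matrix (Fin n) (Fin n) ℂ := (hA.eigenvectorUnitary : Matrix (Fin n) (Fin n) ℂ) with hVdef
  have hVV : star V * V = 1 := (Matrix.mem_unitaryGroup_iff').mp hA.eigenvectorUnitary.2
  have hVV' : V * star V = 1 := (Matrix.mem_unitaryGroup_iff).mp hA.eigenvectorUnitary.2
  set a : Fin n → ℝ := hA.eigenvalues with hadef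
  have hAspec : A = V * diagonal (fun k => (a k : ℂ)) * star V := hA.spectral_theorem
  set Q : Matrix (Fin n) (Fin n) ℂ := star U * V with hQdef
  set e : Fin n → ℂ := fun k => ((a k - α : ℝ) : ℂ) with hedef
  have hQQ : Q * star Q = 1 := by
    rw [hQdef, StarMul.star_mul, star_star, Matrix.mul_assoc, ← Matrix.mul_assoc V, hVV',
      Matrix.one_mul, hUU]
  have hQQ' : star Q * Q = 1 := by
    rw [hQdef, StarMul.star_mul, star_star, Matrix.mul_assoc, ← Matrix.mul_assoc U, hUU',
      Matrix.one_mul, hVV]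
  have hC : star U * A * U - (α : ℂ) • 1 = Q * diagonal e * star Q := by
    have h1 : (α : ℂ) • (1 : Matrix (Fin n) (Fin n) ℂ) = Q * ((α : ℂ) • 1) * star Q := by
      rw [Matrix.mul_smul, Matrix.mul_one, Matrix.smul_mul, hQQ]
    have h2 : diagonal e = diagonal (fun k => (a k : ℂ)) - (α : ℂ) • 1 := by
      rw [smul_one_eq_diagonal, diagonal_sub]
      congr 1
      ext k
      simp [hedef]
    rw [h2, Matrix.mul_sub, Matrix.sub_mul, ← h1]
    congr 1
    rw [hAspec, hQdef, StarMul.star_mul, star_star]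
    simp only [Matrix.mul_assoc]
  rw [hC]
  have hrow : ∀ (X : Matrix (Fin n) (Fin n) ℂ),
      ∑ j, (‖X i j‖) ^ 2 = ((X * star X) i i).re := by
    intro X
    rw [mul_apply, Complex.re_sum]
    refine Finset.sum_congr rfl fun j _ => ?_
    rw [Complex.sq_norm]
    simp [star_apply, Complex.mul_conj]
  have hQ1 : ∑ k, Complex.normSq (Q i k) = 1 := by
    have h := hrow Q
    rw [hQQ] at h
    simp only [one_apply_eq, Complex.one_re] at h
    simpa [Complex.sq_norm] using h
  rw [hrow]
  have hsC : star (Q * diagonal e * star Q) = Q * diagonal (star e) * star Q := by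
    rw [StarMul.star_mul (Q * diagonal e) (star Q), star_star,
      StarMul.star_mul Q (diagonal e),
      Matrix.star_eq_conjTranspose (diagonal e), diagonal_conjTranspose,
      ← Matrix.mul_assoc]
  have hCsq : (Q * diagonal e * star Q) * star (Q * diagonal e * star Q)
      = Q * diagonal (e * star e) * star Q := by
    rw [hsC]
    calc Q * diagonal e * star Q * (Q * diagonal (star e) * star Q)
        = Q * diagonal e * ((star Q * Q) * (diagonal (star e) * star Q)) := by
          simp only [Matrix.mul_assoc]
      _ = Q * ((diagonal e * diagonal (star e)) * star Q) := by
          rw [hQQ', Matrix.one_mul]; simp only [Matrix.mul_assoc]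
      _ = Q * diagonal (e * star e) * star Q := by
          rw [diagonal_mul_diagonal]
          simp only [Matrix.mul_assoc, hQdef]
          rfl
  rw [hCsq]
  have hentry : ((Q * diagonal (e * star e) * star Q) i i).re
      = ∑ k, (a k - α) ^ 2 * Complex.normSq (Q i k) := by
    have hkey : (Q * diagonal (e * star e) * star Q) i i
        = ∑ k, (((a k - α) ^ 2 * Complex.normSq (Q i k) : ℝ) : ℂ) := by
      rw [mul_apply]
      refine Finset.sum_congr rfl fun k _ => ?_
      rw [mul_diagonal, Matrix.star_apply]
      simp only [Pi.mul_apply, Pi.star_apply, hedef]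
      rw [show star (((a k - α : ℝ)) : ℂ) = (((a k - α : ℝ)) : ℂ) from by
        rw [Complex.star_def, Complex.conj_ofReal]]
      rw [show Q i k * ((((a k - α : ℝ)) : ℂ) * (((a k - α : ℝ)) : ℂ)) * star (Q i k)
          = ((((a k - α : ℝ)) : ℂ) * (((a k - α : ℝ)) : ℂ)) * (Q i k * star (Q i k)) from by ring]
      rw [Complex.star_def, Complex.mul_conj]
      push_cast
      ring
    rw [hkey, ← Complex.ofReal_sum, Complex.ofReal_re]
  rw [hentry]
  calc ∑ k, (a k - α) ^ 2 * Complex.normSq (Q i k)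
      ≤ ∑ k, c ^ 2 * Complex.normSq (Q i k) := by
        refine Finset.sum_le_sum fun k _ => ?_
        refine mul_le_mul_of_nonneg_right ?_ (Complex.normSq_nonneg _)
        have h := hc k
        nlinarith [abs_nonneg (a k - α), sq_abs (a k - α)]
    _ = c ^ 2 := by rw [← Finset.mul_sum, hQ1, mul_one]

lemma weight_bound (l : Fin n → ℝ) (hl0 : ∀ i, 0 ≤ l i) (X : Fin n → Fin n → ℝ)
    (hXsym : ∀ i j, X i j = X j i) (c : ℝ)
    (hrow : ∀ i, ∑ j, X i j ^ 2 ≤ c ^ 2) (hl2 : ∀ i, 0 ≤ l i ^ 2) :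
    ∑ i, ∑ j, (l i * |l i - l j|) * X i j ^ 2 ≤ c ^ 2 * ∑ i, l i ^ 2 := by
  have swap : ∑ i, ∑ j, (l j * |l j - l i|) * X i j ^ 2
      = ∑ i, ∑ j, (l i * |l i - l j|) * X i j ^ 2 := by
    rw [Finset.sum_comm]
    exact Finset.sum_congr rfl fun i _ => Finset.sum_congr rfl fun j _ => by rw [hXsym j i]
  have swap2 : ∑ i, ∑ j, l j ^ 2 * X i j ^ 2 = ∑ i, ∑ j, l i ^ 2 * X i j ^ 2 := by
    rw [Finset.sum_comm]
    exact Finset.sum_congr rfl fun i _ => Finset.sum_congr rfl fun j _ => by rw [hXsym j i]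
  have key : (2:ℝ) * (∑ i, ∑ j, (l i * |l i - l j|) * X i j ^ 2)
      ≤ 2 * (∑ i, ∑ j, l i ^ 2 * X i j ^ 2) := by
    have e1 : (2:ℝ) * (∑ i, ∑ j, (l i * |l i - l j|) * X i j ^ 2)
        = ∑ i, ∑ j, (l i * |l i - l j| + l j * |l j - l i|) * X i j ^ 2 := by
      rw [two_mul]
      nth_rewrite 2 [← swap]
      rw [← Finset.sum_add_distrib]
      exact Finset.sum_congr rfl fun i _ => by
        rw [← Finset.sum_add_distrib]
        exact Finset.sum_congr rfl fun j _ => by ring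
    have e2 : (2:ℝ) * (∑ i, ∑ j, l i ^ 2 * X i j ^ 2)
        = ∑ i, ∑ j, (l i ^ 2 + l j ^ 2) * X i j ^ 2 := by
      rw [two_mul]
      nth_rewrite 2 [← swap2]
      rw [← Finset.sum_add_distrib]
      exact Finset.sum_congr rfl fun i _ => by
        rw [← Finset.sum_add_distrib]
        exact Finset.sum_congr rfl fun j _ => by ring
    rw [e1, e2]
    refine Finset.sum_le_sum fun i _ => Finset.sum_le_sum fun j _ => ?_
    refine mul_le_mul_of_nonneg_right ?_ (sq_nonneg _)
    have h1 : l i * |l i - l j| + l j * |l j - l i| = (l i + l j) * |l i - l j| := by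
      rw [abs_sub_comm (l j) (l i)]; ring
    rw [h1]
    rcases abs_cases (l i - l j) with ⟨h2, _⟩ | ⟨h2, _⟩ <;> rw [h2] <;>
      nlinarith [hl0 i, hl0 j]
  have step2 : ∑ i, ∑ j, l i ^ 2 * X i j ^ 2 ≤ c ^ 2 * ∑ i, l i ^ 2 := by
    calc ∑ i, ∑ j, l i ^ 2 * X i j ^ 2 = ∑ i, l i ^ 2 * ∑ j, X i j ^ 2 := by
          exact Finset.sum_congr rfl fun i _ => by rw [Finset.mul_sum]
      _ ≤ ∑ i, l i ^ 2 * c ^ 2 :=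
          Finset.sum_le_sum fun i _ => mul_le_mul_of_nonneg_left (hrow i) (hl2 i)
      _ = c ^ 2 * ∑ i, l i ^ 2 := by rw [← Finset.sum_mul, mul_comm]
  linarith

theorem gruss_trace_psd {n : ℕ} (Z A B : Matrix (Fin n) (Fin n) ℂ)
    (hZ : Z.PosSemidef) (hA : A.IsHermitian) (hB : B.IsHermitian)
    (p q r s : ℝ)
    (hp : IsGreatest (Set.range hA.eigenvalues) p)
    (hq : IsLeast (Set.range hA.eigenvalues) q)
    (hr : IsGreatest (Set.range hB.eigenvalues) r)
    (hs : IsLeast (Set.range hB.eigenvalues) s) :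
    ‖Matrix.trace (Z * Z * A * B) - Matrix.trace (Z * A * Z * B)‖ ≤
      (1 / 4) * (p - q) * (r - s) * (Matrix.trace (Z * Z)).re := by
  classical
  set l : Fin n → ℝ := hZ.1.eigenvalues with hldef
  set U : Matrix (Fin n) (Fin n) ℂ := (hZ.1.eigenvectorUnitary : Matrix (Fin n) (Fin n) ℂ) with hUdef
  have hUU : star U * U = 1 := (Matrix.mem_unitaryGroup_iff').mp hZ.1.eigenvectorUnitary.2
  have hUU' : U * star U = 1 := (Matrix.mem_unitaryGroup_iff).mp hZ.1.eigenvectorUnitary.2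
  have hZspec : Z = U * diagonal (fun i => (l i : ℂ)) * star U := hZ.1.spectral_theorem
  have hl0 : ∀ i, 0 ≤ l i := fun i => hZ.eigenvalues_nonneg i
  set M : Matrix (Fin n) (Fin n) ℂ := star U * A * U with hMdef
  set N : Matrix (Fin n) (Fin n) ℂ := star U * B * U with hNdef
  have hE1 : trace (Z * Z * A * B) = ∑ i, ∑ j, ((l i : ℂ) * l i) * (M i j * N j i) := by
    conv_lhs => rw [hZspec]
    exact trA U hUU hUU' l A B
  have hE2 : trace (Z * A * Z * B) = ∑ i, ∑ j, ((l i : ℂ) * l j) * (M i j * N j i) := by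
    conv_lhs => rw [hZspec]
    exact trB U hUU hUU' l A B
  have hT : (trace (Z * Z)).re = ∑ i, l i ^ 2 := by
    conv_lhs => rw [hZspec]
    exact trZZre U hUU hUU' l
  have hT0 : 0 ≤ ∑ i, l i ^ 2 := Finset.sum_nonneg fun i _ => sq_nonneg _
  set Cm : Matrix (Fin n) (Fin n) ℂ := M - (((p + q) / 2 : ℝ) : ℂ) • 1 with hCmdef
  set Dm : Matrix (Fin n) (Fin n) ℂ := N - (((r + s) / 2 : ℝ) : ℂ) • 1 with hDmdef
  -- Hermitian facts
  have hherm : ∀ (G : Matrix (Fin n) (Fin n) ℂ) (hG : G.IsHermitian) (t : ℝ),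
      (star U * G * U - ((t : ℝ) : ℂ) • 1).IsHermitian := by
    intro G hG t
    have h1 : (star U * G * U).IsHermitian := by
      have := Matrix.isHermitian_conjTranspose_mul_mul U hG
      simpa [Matrix.star_eq_conjTranspose] using this
    have h2 : (((t : ℝ) : ℂ) • (1 : Matrix (Fin n) (Fin n) ℂ)).IsHermitian := by
      unfold Matrix.IsHermitian
      rw [conjTranspose_smul, conjTranspose_one, Complex.star_def, Complex.conj_ofReal]
    exact h1.sub h2
  have hCmH : Cm.IsHermitian := hherm A hA _
  have hDmH : Dm.IsHermitian := hherm B hB _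
  have habs_sym : ∀ (G : Matrix (Fin n) (Fin n) ℂ) (hG : G.IsHermitian) (i j : Fin n),
      ‖G i j‖ = ‖G j i‖ := by
    intro G hG i j
    have h := congrFun (congrFun hG j) i
    rw [conjTranspose_apply] at h
    rw [← h, Complex.star_def, Complex.norm_conj]
  -- shift identity
  have hshift : ∀ i j : Fin n, ((l i : ℂ) * l i - (l i : ℂ) * l j) * (M i j * N j i)
      = ((l i : ℂ) * l i - (l i : ℂ) * l j) * (Cm i j * Dm j i) := by
    intro i j
    by_cases h : i = j
    · subst h; simp
    · have h1 : Cm i j = M i j := by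
        rw [hCmdef]
        simp [Matrix.sub_apply, Matrix.smul_apply, Matrix.one_apply_ne h]
      have h2 : Dm j i = N j i := by
        rw [hDmdef]
        simp [Matrix.sub_apply, Matrix.smul_apply, Matrix.one_apply_ne (Ne.symm h)]
      rw [h1, h2]
  have hdiff : trace (Z * Z * A * B) - trace (Z * A * Z * B)
      = ∑ i, ∑ j, ((l i : ℂ) * l i - (l i : ℂ) * l j) * (Cm i j * Dm j i) := by
    rw [hE1, hE2, ← Finset.sum_sub_distrib]
    refine Finset.sum_congr rfl fun i _ => ?_
    rw [← Finset.sum_sub_distrib]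
    refine Finset.sum_congr rfl fun j _ => ?_
    rw [← sub_mul, hshift i j]
  -- bound by sum of absolute values
  have habs : ‖trace (Z * Z * A * B) - trace (Z * A * Z * B)‖
      ≤ ∑ i, ∑ j, (l i * |l i - l j|) * (‖Cm i j‖ * ‖Dm j i‖) := by
    rw [hdiff]
    refine le_trans (norm_sum_le _ _) ?_
    refine Finset.sum_le_sum fun i _ => le_trans (norm_sum_le _ _) ?_
    refine Finset.sum_le_sum fun j _ => ?_
    rw [norm_mul, norm_mul]
    have h1 : ((l i : ℂ) * l i - (l i : ℂ) * l j) = ((l i * (l i - l j) : ℝ) : ℂ) := by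
      push_cast; ring
    rw [h1, Complex.norm_real, Real.norm_eq_abs, abs_mul, abs_of_nonneg (hl0 i)]
  -- Cauchy-Schwarz on pairs
  set W : Fin n × Fin n → ℝ := fun pr => l pr.1 * |l pr.1 - l pr.2| with hWdef
  set Xp : Fin n × Fin n → ℝ := fun pr => ‖Cm pr.1 pr.2‖ with hXpdef
  set Yp : Fin n × Fin n → ℝ := fun pr => ‖Dm pr.2 pr.1‖ with hYpdef
  have hprod : ∑ i, ∑ j, (l i * |l i - l j|) * (‖Cm i j‖ * ‖Dm j i‖)
      = ∑ pr : Fin n × Fin n, W pr * (Xp pr * Yp pr) :=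
    (Fintype.sum_prod_type (fun pr : Fin n × Fin n => W pr * (Xp pr * Yp pr))).symm
  have hW0 : ∀ pr : Fin n × Fin n, 0 ≤ W pr := fun pr => mul_nonneg (hl0 _) (abs_nonneg _)
  have hCS := Finset.sum_sq_le_sum_mul_sum_of_sq_eq_mul (Finset.univ : Finset (Fin n × Fin n))
      (r := fun pr => W pr * (Xp pr * Yp pr)) (f := fun pr => W pr * Xp pr ^ 2)
      (g := fun pr => W pr * Yp pr ^ 2)
      (fun pr _ => mul_nonneg (hW0 pr) (sq_nonneg _))
      (fun pr _ => mul_nonneg (hW0 pr) (sq_nonneg _))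
      (fun pr _ => by ring)
  have hpq : q ≤ p := hp.2 hq.1
  have hrs : s ≤ r := hr.2 hs.1
  have hrowC : ∀ i, ∑ j, (‖Cm i j‖) ^ 2 ≤ ((p - q) / 2) ^ 2 := by
    intro i
    refine row_bound U A hUU hUU' hA ((p + q) / 2) ((p - q) / 2) ?_ i
    intro k
    have h1 := hp.2 (Set.mem_range_self k)
    have h2 := hq.2 (Set.mem_range_self k)
    rw [abs_le]; constructor <;> linarith
  have hrowD : ∀ i, ∑ j, (‖Dm i j‖) ^ 2 ≤ ((r - s) / 2) ^ 2 := by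
    intro i
    refine row_bound U B hUU hUU' hB ((r + s) / 2) ((r - s) / 2) ?_ i
    intro k
    have h1 := hr.2 (Set.mem_range_self k)
    have h2 := hs.2 (Set.mem_range_self k)
    rw [abs_le]; constructor <;> linarith
  have hSX : ∑ pr : Fin n × Fin n, W pr * Xp pr ^ 2 ≤ ((p - q) / 2) ^ 2 * ∑ i, l i ^ 2 := by
    have hwb := weight_bound l hl0 (fun i j => ‖Cm i j‖)
      (fun i j => habs_sym Cm hCmH i j) ((p - q) / 2) hrowC (fun i => sq_nonneg _)
    calc ∑ pr : Fin n × Fin n, W pr * Xp pr ^ 2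
        = ∑ i, ∑ j, (l i * |l i - l j|) * (‖Cm i j‖) ^ 2 :=
          Fintype.sum_prod_type _
      _ ≤ _ := hwb
  have hSY : ∑ pr : Fin n × Fin n, W pr * Yp pr ^ 2 ≤ ((r - s) / 2) ^ 2 * ∑ i, l i ^ 2 := by
    have hwb := weight_bound l hl0 (fun i j => ‖Dm i j‖)
      (fun i j => habs_sym Dm hDmH i j) ((r - s) / 2) hrowD (fun i => sq_nonneg _)
    calc ∑ pr : Fin n × Fin n, W pr * Yp pr ^ 2
        = ∑ i, ∑ j, (l i * |l i - l j|) * (‖Dm j i‖) ^ 2 :=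
          Fintype.sum_prod_type _
      _ = ∑ i, ∑ j, (l i * |l i - l j|) * (‖Dm i j‖) ^ 2 :=
          Finset.sum_congr rfl fun i _ => Finset.sum_congr rfl fun j _ => by
            rw [habs_sym Dm hDmH j i]
      _ ≤ _ := hwb
  have hL0 : 0 ≤ ∑ pr : Fin n × Fin n, W pr * (Xp pr * Yp pr) :=
    Finset.sum_nonneg fun pr _ =>
      mul_nonneg (hW0 pr) (mul_nonneg (norm_nonneg _) (norm_nonneg _))
  have hS2nn : 0 ≤ ∑ pr : Fin n × Fin n, W pr * Yp pr ^ 2 :=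
    Finset.sum_nonneg fun pr _ => mul_nonneg (hW0 pr) (sq_nonneg _)
  have hBnn : 0 ≤ ((p - q) / 2) ^ 2 * ∑ i, l i ^ 2 := mul_nonneg (sq_nonneg _) hT0
  have hsq : (∑ pr : Fin n × Fin n, W pr * (Xp pr * Yp pr)) ^ 2
      ≤ ((1 / 4) * (p - q) * (r - s) * ∑ i, l i ^ 2) ^ 2 := by
    calc (∑ pr : Fin n × Fin n, W pr * (Xp pr * Yp pr)) ^ 2
        ≤ (∑ pr : Fin n × Fin n, W pr * Xp pr ^ 2) * ∑ pr : Fin n × Fin n, W pr * Yp pr ^ 2 := hCS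
      _ ≤ (((p - q) / 2) ^ 2 * ∑ i, l i ^ 2) * (((r - s) / 2) ^ 2 * ∑ i, l i ^ 2) :=
          mul_le_mul hSX hSY hS2nn hBnn
      _ = ((1 / 4) * (p - q) * (r - s) * ∑ i, l i ^ 2) ^ 2 := by ring
  have hK0 : 0 ≤ (1 / 4) * (p - q) * (r - s) * ∑ i, l i ^ 2 := by
    have h1 : (0:ℝ) ≤ p - q := by linarith
    have h2 : (0:ℝ) ≤ r - s := by linarith
    positivity
  have hfin : ∑ pr : Fin n × Fin n, W pr * (Xp pr * Yp pr)
      ≤ (1 / 4) * (p - q) * (r - s) * ∑ i, l i ^ 2 := by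
    nlinarith [hsq, hL0, hK0]
  calc ‖trace (Z * Z * A * B) - trace (Z * A * Z * B)‖
      ≤ ∑ i, ∑ j, (l i * |l i - l j|) * (‖Cm i j‖ * ‖Dm j i‖) := habs
    _ = ∑ pr : Fin n × Fin n, W pr * (Xp pr * Yp pr) := hprod
    _ ≤ (1 / 4) * (p - q) * (r - s) * ∑ i, l i ^ 2 := hfin
    _ = (1 / 4) * (p - q) * (r - s) * (trace (Z * Z)).re := by rw [hT]
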